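/- Let (x_j)_{j∈J} be a finite frame of a finite-dimensional real inner product space H and let λ_c be the infimum of all λ>0 such that (x_j)_{j∈J} does λ-saturation recovery on the closed unit ball B_H. Then the set of x∈H with ‖x‖≤1 such that (x_j)_{j∈J_{λ_c}^♯(x)} is not a frame of H is finite; moreover its cardinality is at most 3^{|J|}. -/

import Mathlib

local notation "⟪" x ", " y "⟫" => @inner ℝ _ _ x y

noncomputable def satur (l t : ℝ) : ℝ := max (-l) (min l t)

lemma satur_eq_self {l t : ℝ} (h : |t| ≤ l) : satur l t = t := by
  rw [abs_le] at h; unfold satur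
  rw [min_eq_right h.2, max_eq_right h.1]

lemma satur_of_le {l t : ℝ} (h0 : 0 < l) (h : l ≤ t) : satur l t = l := by
  unfold satur; rw [min_eq_left h, max_eq_right (by linarith)]

lemma satur_of_ge {l t : ℝ} (h0 : 0 < l) (h : t ≤ -l) : satur l t = -l := by
  unfold satur; rw [min_eq_right (by linarith), max_eq_left h]

lemma satur_comp {l l' : ℝ} (t : ℝ) (h0 : 0 < l) (h : l ≤ l') : satur l (satur l' t) = satur l t := by
  have h0' : 0 < l' := lt_of_lt_of_le h0 h
  rcases le_total l' t with h1 | h1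
  · rw [satur_of_le h0' h1, satur_of_le h0 h, satur_of_le h0 (le_trans h h1)]
  rcases le_total t (-l') with h2 | h2
  · rw [satur_of_ge h0' h2, satur_of_ge h0 (by linarith), satur_of_ge h0 (by linarith)]
  · rw [satur_eq_self (abs_le.2 ⟨h2, h1⟩)]

theorem finitely_many_failures_at_critical_level
    {H : Type*} [NormedAddCommGroup H] [InnerProductSpace ℝ H] [FiniteDimensional ℝ H]
    {J : Type*} [Fintype J] (xv : J → H)
    (hframe : Submodule.span ℝ (Set.range xv) = ⊤)
    (lamc : ℝ)
    (hlamc : lamc = sInf {l : ℝ | 0 < l ∧ Set.InjOn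
      (fun x : H => fun j : J => satur l ⟪x, xv j⟫) (Metric.closedBall (0 : H) 1)}) :
    {x : H | ‖x‖ ≤ 1 ∧
        Submodule.span ℝ (xv '' {j : J | |⟪x, xv j⟫| < lamc}) ≠ ⊤}.Finite ∧
      {x : H | ‖x‖ ≤ 1 ∧
        Submodule.span ℝ (xv '' {j : J | |⟪x, xv j⟫| < lamc}) ≠ ⊤}.ncard ≤
          3 ^ Fintype.card J := by
  classical
  by_cases hH : Subsingleton H
  · have hempty : {x : H | ‖x‖ ≤ 1 ∧
        Submodule.span ℝ (xv '' {j : J | |⟪x, xv j⟫| < lamc}) ≠ ⊤} = ∅ := by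
      ext x
      simp only [Set.mem_setOf_eq, Set.mem_empty_iff_false, iff_false, not_and]
      intro _
      simp only [ne_eq, not_not]
      apply Subsingleton.elim
    rw [hempty]
    exact ⟨Set.finite_empty, by simp⟩
  rw [not_subsingleton_iff_nontrivial] at hH
  set A : Set ℝ := {l : ℝ | 0 < l ∧ Set.InjOn
      (fun x : H => fun j : J => satur l ⟪x, xv j⟫) (Metric.closedBall (0 : H) 1)} with hA
  -- constant C bounding the norms of the frame vectors
  set C : ℝ := (∑ j, ‖xv j‖) + 1 with hCdef
  have hC : ∀ j, ‖xv j‖ ≤ C := by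
    intro j
    have : ‖xv j‖ ≤ ∑ j, ‖xv j‖ :=
      Finset.single_le_sum (fun i _ => norm_nonneg (xv i)) (Finset.mem_univ j)
    linarith
  have hC0 : 0 < C := by
    have : (0:ℝ) ≤ ∑ j, ‖xv j‖ := Finset.sum_nonneg fun i _ => norm_nonneg _
    linarith
  -- the set A is nonempty
  have hinner_le : ∀ (x : H) (j : J), ‖x‖ ≤ 1 → |⟪x, xv j⟫| ≤ C := by
    intro x j hx
    calc |⟪x, xv j⟫| ≤ ‖x‖ * ‖xv j‖ := abs_real_inner_le_norm x (xv j)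
    _ ≤ 1 * C := by
        apply mul_le_mul hx (hC j) (norm_nonneg _) zero_le_one
    _ = C := one_mul C
  have hA_ne : A.Nonempty := by
    refine ⟨C, hC0, ?_⟩
    intro x hx y hy hxy
    rw [Metric.mem_closedBall, dist_zero_right] at hx hy
    have heq : ∀ j, ⟪x, xv j⟫ = ⟪y, xv j⟫ := by
      intro j
      have h := congrFun hxy j
      simp only at h
      rwa [satur_eq_self (hinner_le x j hx), satur_eq_self (hinner_le y j hy)] at h
    have hker : ∀ j, ⟪x - y, xv j⟫ = 0 := by
      intro j
      rw [inner_sub_left, heq j, sub_self]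
    have hmem : x - y ∈ LinearMap.ker (((innerSL ℝ (x - y)) : H →L[ℝ] ℝ) : H →ₗ[ℝ] ℝ) := by
      have hle : Submodule.span ℝ (Set.range xv) ≤
          LinearMap.ker (((innerSL ℝ (x - y)) : H →L[ℝ] ℝ) : H →ₗ[ℝ] ℝ) := by
        rw [Submodule.span_le]
        rintro - ⟨j, rfl⟩
        simp only [SetLike.mem_coe, LinearMap.mem_ker, ContinuousLinearMap.coe_coe,
          innerSL_apply_apply]
        exact hker j
      exact hle (by rw [hframe]; trivial)
    have h0 : ⟪x - y, x - y⟫ = (0:ℝ) := by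
      simpa only [LinearMap.mem_ker, ContinuousLinearMap.coe_coe, innerSL_apply_apply] using hmem
    exact sub_eq_zero.mp (inner_self_eq_zero.mp h0)
  -- A is upward closed
  have hA_up : ∀ l ∈ A, ∀ l', l ≤ l' → l' ∈ A := by
    rintro l ⟨hl0, hinj⟩ l' hll'
    refine ⟨lt_of_lt_of_le hl0 hll', ?_⟩
    intro x hx y hy hxy
    apply hinj hx hy
    funext j
    have := congrFun hxy j
    simp only at this ⊢
    rw [← satur_comp (⟪x, xv j⟫) hl0 hll', ← satur_comp (⟪y, xv j⟫) hl0 hll', this]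
  -- a vector with nonzero inner products against all nonzero frame vectors
  have hex : ∃ x' : H, ∀ j, xv j ≠ 0 → ⟪x', xv j⟫ ≠ 0 := by
    by_contra hc
    push_neg at hc
    set p : {j : J // xv j ≠ 0} → Subspace ℝ H := fun j => (ℝ ∙ xv j.1)ᗮ with hp
    have hcov : ⋃ i, (p i : Set H) = Set.univ := by
      ext x
      simp only [Set.mem_iUnion, Set.mem_univ, iff_true]
      obtain ⟨j, hj, hj0⟩ := hc x
      exact ⟨⟨j, hj⟩, Submodule.mem_orthogonal_singleton_iff_inner_left.mpr hj0⟩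
    obtain ⟨i, hi⟩ := Subspace.exists_eq_top_of_iUnion_eq_univ hcov
    have : xv i.1 ∈ p i := by rw [hi]; trivial
    have : ⟪xv i.1, xv i.1⟫ = (0:ℝ) :=
      Submodule.mem_orthogonal_singleton_iff_inner_right.mp this
    exact i.2 (inner_self_eq_zero.mp this)
  obtain ⟨x', hx'⟩ := hex
  have hjne : ∃ j, xv j ≠ 0 := by
    by_contra hno
    push_neg at hno
    have : Set.range xv ⊆ {0} := by rintro - ⟨j, rfl⟩; exact hno j
    have hle : Submodule.span ℝ (Set.range xv) ≤ Submodule.span ℝ {(0:H)} :=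
      Submodule.span_mono this
    rw [hframe, Submodule.span_zero_singleton] at hle
    obtain ⟨u, hu⟩ := exists_ne (0:H)
    exact hu (by simpa using hle (Submodule.mem_top (x := u)))
  have hx'0 : x' ≠ 0 := by
    obtain ⟨j, hj⟩ := hjne
    intro h
    exact hx' j hj (by simp [h])
  obtain ⟨x₀, hx₀norm, hx₀⟩ : ∃ x₀ : H, ‖x₀‖ = 1 ∧ ∀ j, xv j ≠ 0 → ⟪x₀, xv j⟫ ≠ 0 := by
    refine ⟨‖x'‖⁻¹ • x', ?_, ?_⟩
    · rw [norm_smul, norm_inv, norm_norm]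
      exact inv_mul_cancel₀ (norm_ne_zero_iff.mpr hx'0)
    · intro j hj
      rw [real_inner_smul_left]
      exact mul_ne_zero (inv_ne_zero (norm_ne_zero_iff.mpr hx'0)) (hx' j hj)
  set s : Finset J := Finset.univ.filter (fun j => xv j ≠ 0) with hsdef
  have hs : s.Nonempty := by
    obtain ⟨j, hj⟩ := hjne
    exact ⟨j, by simp [hsdef, hj]⟩
  set b : ℝ := s.inf' hs (fun j => |⟪x₀, xv j⟫|) with hbdef
  have hb : 0 < b := by
    rw [hbdef, Finset.lt_inf'_iff]
    intro j hj
    rw [hsdef, Finset.mem_filter] at hj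
    exact abs_pos.mpr (hx₀ j hj.2)
  have hlow : ∀ l ∈ A, b / 2 ≤ l := by
    rintro l ⟨hl0, hinj⟩
    by_contra hlt
    push_neg at hlt
    have hcol : (fun j : J => satur l ⟪x₀, xv j⟫) =
        (fun j : J => satur l ⟪(1/2 : ℝ) • x₀, xv j⟫) := by
      funext j
      by_cases hj : xv j = 0
      · simp [hj, inner_zero_right]
      · have hble : b ≤ |⟪x₀, xv j⟫| :=
          Finset.inf'_le _ (by simp [hsdef, hj])
        rw [real_inner_smul_left]
        rcases (hx₀ j hj).lt_or_gt with hneg | hpos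
        · have h1 : ⟪x₀, xv j⟫ ≤ -b := by
            rw [abs_of_neg hneg] at hble; linarith
          rw [satur_of_ge hl0 (by linarith), satur_of_ge hl0 (by linarith)]
        · have h1 : b ≤ ⟪x₀, xv j⟫ := by
            rw [abs_of_pos hpos] at hble; linarith
          rw [satur_of_le hl0 (by linarith), satur_of_le hl0 (by linarith)]
    have hmem1 : x₀ ∈ Metric.closedBall (0:H) 1 := by
      rw [Metric.mem_closedBall, dist_zero_right, hx₀norm]
    have hmem2 : (1/2 : ℝ) • x₀ ∈ Metric.closedBall (0:H) 1 := by
      rw [Metric.mem_closedBall, dist_zero_right, norm_smul, hx₀norm]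
      norm_num
    have heq := hinj hmem1 hmem2 hcol
    have : ‖x₀‖ = ‖(1/2:ℝ) • x₀‖ := by rw [← heq]
    rw [hx₀norm, norm_smul, hx₀norm] at this
    norm_num at this
  have hpos : 0 < lamc := by
    rw [hlamc]
    exact lt_of_lt_of_le (by linarith) (le_csInf hA_ne hlow)
  -- the failure set and the sign-pattern map
  set T : Set H := {x : H | ‖x‖ ≤ 1 ∧
      Submodule.span ℝ (xv '' {j : J | |⟪x, xv j⟫| < lamc}) ≠ ⊤} with hTdef
  set P : H → J → Fin 3 := fun x j =>
    if lamc ≤ ⟪x, xv j⟫ then 0 else if ⟪x, xv j⟫ ≤ -lamc then 1 else 2 with hPdef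
  have hinjP : Set.InjOn P T := by
    intro x hx y hy hPxy
    by_contra hne
    obtain ⟨hx1, hxs⟩ := hx
    obtain ⟨hy1, -⟩ := hy
    have hsame : ∀ j, (lamc ≤ ⟪x, xv j⟫ ∧ lamc ≤ ⟪y, xv j⟫) ∨
        (⟪x, xv j⟫ ≤ -lamc ∧ ⟪y, xv j⟫ ≤ -lamc) ∨
        (|⟪x, xv j⟫| < lamc ∧ |⟪y, xv j⟫| < lamc) := by
      intro j
      have h := congrFun hPxy j
      simp only [hPdef] at h
      rcases le_or_gt lamc ⟪x, xv j⟫ with h1 | h1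
      · rw [if_pos h1] at h
        rcases le_or_gt lamc ⟪y, xv j⟫ with h3 | h3
        · exact Or.inl ⟨h1, h3⟩
        · rw [if_neg (not_le.mpr h3)] at h
          split_ifs at h <;> exact absurd h (by decide)
      · rw [if_neg (not_le.mpr h1)] at h
        rcases le_or_gt ⟪x, xv j⟫ (-lamc) with h2 | h2
        · rw [if_pos h2] at h
          split_ifs at h with h3 h4
          · exact absurd h (by decide)
          · exact Or.inr (Or.inl ⟨h2, h4⟩)
          · exact absurd h (by decide)
        · rw [if_neg (not_le.mpr h2)] at h
          split_ifs at h with h3 h4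
          · exact absurd h (by decide)
          · exact absurd h (by decide)
          · push_neg at h3 h4
            exact Or.inr (Or.inr ⟨abs_lt.mpr ⟨h2, h1⟩, abs_lt.mpr ⟨h4, h3⟩⟩)
    -- a nonzero vector orthogonal to the unsaturated frame vectors of x
    have hWne : (Submodule.span ℝ (xv '' {j : J | |⟪x, xv j⟫| < lamc}))ᗮ ≠ ⊥ :=
      fun h => hxs (Submodule.orthogonal_eq_bot_iff.mp h)
    obtain ⟨v, hvW, hv0⟩ := (Submodule.ne_bot_iff _).mp hWne
    have hvperp : ∀ j, |⟪x, xv j⟫| < lamc → ⟪v, xv j⟫ = 0 := by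
      intro j hj
      have hxvW : xv j ∈ Submodule.span ℝ (xv '' {j : J | |⟪x, xv j⟫| < lamc}) :=
        Submodule.subset_span ⟨j, hj, rfl⟩
      have h0 := (Submodule.mem_orthogonal _ v).mp hvW (xv j) hxvW
      rw [real_inner_comm]
      exact h0
    -- the midpoint has norm strictly less than one
    obtain ⟨m, hmdef⟩ : ∃ m : H, m = (1/2 : ℝ) • (x + y) := ⟨_, rfl⟩
    obtain ⟨r, hrdef⟩ : ∃ r : ℝ, r = ‖m‖ := ⟨_, rfl⟩
    have hmlt : r < 1 := by
      have h2 := norm_combo_lt_of_ne hx1 hy1 hne (by norm_num : (0:ℝ) < 1/2)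
        (by norm_num : (0:ℝ) < 1/2) (by norm_num)
      calc r = ‖(1/2:ℝ) • x + (1/2:ℝ) • y‖ := by rw [hrdef, hmdef, smul_add]
      _ < 1 := h2
    have hinner_m : ∀ u, ⟪m, u⟫ = (⟪x, u⟫ + ⟪y, u⟫) / 2 := by
      intro u
      rw [hmdef, real_inner_smul_left, inner_add_left]
      ring
    have hr0 : 0 ≤ r := hrdef ▸ norm_nonneg m
    obtain ⟨c, hcdef⟩ : ∃ c : ℝ, c = 2 / (1 + r) := ⟨_, rfl⟩
    have h1r : 0 < 1 + r := by linarith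
    have hc1 : 1 < c := by rw [hcdef, lt_div_iff₀ h1r]; linarith
    have hcr : c * r < 1 := by rw [hcdef, div_mul_eq_mul_div, div_lt_one h1r]; linarith
    have hc0 : 0 < c := by linarith
    obtain ⟨lam, hlamdef⟩ : ∃ lam : ℝ, lam = lamc * (1 + c) / 2 := ⟨_, rfl⟩
    have hlam_gt : lamc < lam := by
      have h3 : 0 < lamc * (c - 1) := mul_pos hpos (by linarith)
      rw [hlamdef]; nlinarith [h3]
    have hlam0 : 0 < lam := lt_trans hpos hlam_gt
    obtain ⟨dl, hdl⟩ : ∃ dl : ℝ, dl = lamc * (c - 1) / 2 := ⟨_, rfl⟩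
    have hdl0 : 0 < dl := by
      have h3 : 0 < lamc * (c - 1) := mul_pos hpos (by linarith)
      rw [hdl]; linarith
    have hsum : lam + dl = c * lamc := by rw [hlamdef, hdl]; ring
    have hv0' : 0 < ‖v‖ := norm_pos_iff.mpr hv0
    obtain ⟨t, htdef⟩ : ∃ t : ℝ, t = min ((1 - c * r) / ‖v‖) (dl / (C * ‖v‖)) := ⟨_, rfl⟩
    have ht0 : 0 < t := by
      rw [htdef]
      exact lt_min (div_pos (by linarith) hv0') (div_pos hdl0 (mul_pos hC0 hv0'))
    have htv : t * ‖v‖ ≤ 1 - c * r := by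
      have h1 : t ≤ (1 - c * r) / ‖v‖ := htdef ▸ min_le_left _ _
      calc t * ‖v‖ ≤ ((1 - c * r) / ‖v‖) * ‖v‖ := mul_le_mul_of_nonneg_right h1 hv0'.le
      _ = 1 - c * r := div_mul_cancel₀ _ hv0'.ne'
    have htd : ∀ j, |t * ⟪v, xv j⟫| ≤ dl := by
      intro j
      rw [abs_mul, abs_of_pos ht0]
      have h1 : |⟪v, xv j⟫| ≤ ‖v‖ * C :=
        le_trans (abs_real_inner_le_norm v (xv j))
          (mul_le_mul_of_nonneg_left (hC j) (norm_nonneg v))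
      have h2 : t ≤ dl / (C * ‖v‖) := htdef ▸ min_le_right _ _
      calc t * |⟪v, xv j⟫| ≤ (dl / (C * ‖v‖)) * (‖v‖ * C) :=
          mul_le_mul h2 h1 (abs_nonneg _) (div_pos hdl0 (mul_pos hC0 hv0')).le
      _ = dl := by rw [mul_comm ‖v‖ C, div_mul_cancel₀ _ (mul_pos hC0 hv0').ne']
    obtain ⟨p1, hp1def⟩ : ∃ p1 : H, p1 = c • m := ⟨_, rfl⟩
    obtain ⟨p2, hp2def⟩ : ∃ p2 : H, p2 = c • m + t • v := ⟨_, rfl⟩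
    have hp1b : p1 ∈ Metric.closedBall (0:H) 1 := by
      rw [Metric.mem_closedBall, dist_zero_right, hp1def, norm_smul,
        Real.norm_of_nonneg hc0.le, ← hrdef]
      exact hcr.le
    have hp2b : p2 ∈ Metric.closedBall (0:H) 1 := by
      rw [Metric.mem_closedBall, dist_zero_right, hp2def]
      calc ‖c • m + t • v‖ ≤ ‖c • m‖ + ‖t • v‖ := norm_add_le _ _
      _ = c * r + t * ‖v‖ := by
          rw [norm_smul, norm_smul, Real.norm_of_nonneg hc0.le, Real.norm_of_nonneg ht0.le,
            ← hrdef]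
      _ ≤ c * r + (1 - c * r) := by linarith
      _ = 1 := by ring
    have hpne : p1 ≠ p2 := by
      rw [hp1def, hp2def]
      intro h
      have h2 : t • v = 0 := (left_eq_add).mp h
      rcases smul_eq_zero.mp h2 with h3 | h3
      · exact ht0.ne' h3
      · exact hv0 h3
    have himg : (fun j => satur lam ⟪p1, xv j⟫) = (fun j => satur lam ⟪p2, xv j⟫) := by
      funext j
      have hinp1 : ⟪p1, xv j⟫ = c * ⟪m, xv j⟫ := by
        rw [hp1def, real_inner_smul_left]
      have hinp2 : ⟪p2, xv j⟫ = c * ⟪m, xv j⟫ + t * ⟪v, xv j⟫ := by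
        rw [hp2def, inner_add_left, real_inner_smul_left, real_inner_smul_left]
      have habs := htd j
      have habs1 : -dl ≤ t * ⟪v, xv j⟫ := neg_le_of_abs_le habs
      have habs2 : t * ⟪v, xv j⟫ ≤ dl := le_of_abs_le habs
      rcases hsame j with ⟨ha, hb2⟩ | ⟨ha, hb2⟩ | ⟨ha, hb2⟩
      · have hm1 : lamc ≤ ⟪m, xv j⟫ := by rw [hinner_m]; linarith
        have h3 : c * lamc ≤ c * ⟪m, xv j⟫ := mul_le_mul_of_nonneg_left hm1 hc0.le
        have hq1 : lam ≤ ⟪p1, xv j⟫ := by rw [hinp1]; linarith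
        have hq2 : lam ≤ ⟪p2, xv j⟫ := by rw [hinp2]; linarith
        rw [satur_of_le hlam0 hq1, satur_of_le hlam0 hq2]
      · have hm1 : ⟪m, xv j⟫ ≤ -lamc := by rw [hinner_m]; linarith
        have h3 : c * ⟪m, xv j⟫ ≤ c * (-lamc) := mul_le_mul_of_nonneg_left hm1 hc0.le
        have h4 : c * (-lamc) = -(c * lamc) := by ring
        have hq1 : ⟪p1, xv j⟫ ≤ -lam := by rw [hinp1]; linarith
        have hq2 : ⟪p2, xv j⟫ ≤ -lam := by rw [hinp2]; linarith
        rw [satur_of_ge hlam0 hq1, satur_of_ge hlam0 hq2]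
      · have hzero := hvperp j ha
        rw [hinp1, hinp2, hzero, mul_zero, add_zero]
    have hlam_in : lam ∈ A := by
      obtain ⟨l0, hl0A, hl0lt⟩ := exists_lt_of_csInf_lt hA_ne (by rw [← hlamc]; exact hlam_gt)
      exact hA_up l0 hl0A lam hl0lt.le
    exact hpne (hlam_in.2 hp1b hp2b himg)
  have hTfin : T.Finite := Set.Finite.of_finite_image (Set.toFinite (P '' T)) hinjP
  refine ⟨hTfin, ?_⟩
  calc T.ncard = (P '' T).ncard := (Set.ncard_image_of_injOn hinjP).symm
  _ ≤ (Set.univ : Set (J → Fin 3)).ncard :=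
      Set.ncard_le_ncard (Set.subset_univ _) Set.finite_univ
  _ = Fintype.card (J → Fin 3) := by rw [Set.ncard_univ, Nat.card_eq_fintype_card]
  _ = 3 ^ Fintype.card J := by rw [Fintype.card_fun, Fintype.card_fin]
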